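/- Under the setting with i.i.d. values from a regular distribution F, payment functions p^d with d ≥ 1, the random reserve price mechanism (draw quantile reserve q̂ uniformly on [0,1], allocate uniformly to all bidders with quantile ≤ q̂, charge winners (v(q̂)/Z)^{1/d}) has expected revenue APX ≥ (1/8)·n^{1-1/d}·κ^{1/d}, where κ = v(1/2). -/

import Mathlib

open MeasureTheory Set
open scoped Classical

/-- clamp to [0,1] -/
noncomputable def aux_clamp (q : ℝ) : ℝ := max 0 (min q 1)

lemma aux_clamp_mem (q : ℝ) : aux_clamp q ∈ Icc (0:ℝ) 1 := by
  constructor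
  · exact le_max_left _ _
  · have : min q 1 ≤ 1 := min_le_right _ _
    exact max_le (by norm_num) this

lemma aux_clamp_mono : Monotone aux_clamp := by
  intro a b hab
  exact max_le_max le_rfl (min_le_min hab le_rfl)

lemma aux_clamp_eq {q : ℝ} (h : q ∈ Icc (0:ℝ) 1) : aux_clamp q = q := by
  unfold aux_clamp
  rw [min_eq_left h.2, max_eq_right h.1]

lemma aux_intervalIntegrable {f : ℝ → ℝ} (hf : Measurable f) (B : ℝ)
    (hB : ∀ x, |f x| ≤ B) (a b : ℝ) : IntervalIntegrable f volume a b := by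
  rw [intervalIntegrable_iff]
  haveI : IsFiniteMeasure (volume.restrict (Set.uIoc a b)) := by
    constructor
    rw [Measure.restrict_apply_univ]
    exact measure_Ioc_lt_top
  exact Integrable.mono' (integrable_const B) hf.aestronglyMeasurable
    (Filter.Eventually.of_forall fun x => by simpa [Real.norm_eq_abs] using hB x)

/-- bound on each summand and the sum. -/
lemma aux_sum_le (n : ℕ) (d : ℝ) (hd : 1 ≤ d) (w : ℝ) (hw : 0 ≤ w) (r : ℝ)
    (x : Fin n → ℝ) :
    ∑ i, (w * (if x i ≤ r then (1:ℝ) else 0)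
        / (∑ j, if x j ≤ r then (1:ℝ) else 0)) ^ (1/d) ≤ n * max 1 w := by
  have hd0 : (0:ℝ) < d := lt_of_lt_of_le one_pos hd
  have hdinv : (0:ℝ) < 1/d := by positivity
  have key : ∀ i : Fin n, (w * (if x i ≤ r then (1:ℝ) else 0)
      / (∑ j, if x j ≤ r then (1:ℝ) else 0)) ^ (1/d) ≤ max 1 w := by
    intro i
    set Z : ℝ := ∑ j, if x j ≤ r then (1:ℝ) else 0 with hZdef
    have hZnn : 0 ≤ Z := Finset.sum_nonneg fun j _ => by positivity
    set a : ℝ := w * (if x i ≤ r then (1:ℝ) else 0) / Z with hadef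
    have ha_nn : 0 ≤ a := by
      apply div_nonneg _ hZnn
      positivity
    have ha_le : a ≤ w := by
      by_cases h : x i ≤ r
      · have hZ1 : (1:ℝ) ≤ Z := by
          rw [hZdef]
          have := Finset.single_le_sum (f := fun j => if x j ≤ r then (1:ℝ) else 0)
            (fun j _ => by positivity) (Finset.mem_univ i)
          simpa [h] using this
        rw [hadef]
        simp only [h, if_true, mul_one]
        exact div_le_self hw hZ1
      · rw [hadef]
        simp [h, hw]
    rcases le_or_gt a 1 with h1 | h1
    · exact le_trans (Real.rpow_le_one ha_nn h1 hdinv.le) (le_max_left _ _)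
    · have : a ^ (1/d) ≤ a ^ (1:ℝ) := by
        apply Real.rpow_le_rpow_of_exponent_le h1.le
        rw [div_le_one hd0]
        exact hd
      rw [Real.rpow_one] at this
      exact le_trans this (le_trans ha_le (le_max_right _ _))
  calc ∑ i, (w * (if x i ≤ r then (1:ℝ) else 0)
        / (∑ j, if x j ≤ r then (1:ℝ) else 0)) ^ (1/d)
      ≤ ∑ _i : Fin n, max 1 w := Finset.sum_le_sum fun i _ => key i
    _ = n * max 1 w := by simp [mul_comm]

lemma aux_sum_nonneg (n : ℕ) (d : ℝ) (w : ℝ) (hw : 0 ≤ w) (r : ℝ)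
    (x : Fin n → ℝ) :
    0 ≤ ∑ i, (w * (if x i ≤ r then (1:ℝ) else 0)
        / (∑ j, if x j ≤ r then (1:ℝ) else 0)) ^ (1/d) := by
  apply Finset.sum_nonneg
  intro i _
  apply Real.rpow_nonneg
  apply div_nonneg
  · positivity
  · exact Finset.sum_nonneg fun j _ => by positivity

/-- integral of a single coordinate indicator is q -/
lemma aux_coord_integral (n : ℕ) (i : Fin n) (q : ℝ) (hq : q ∈ Icc (0:ℝ) 1) :
    (∫ x : Fin n → ℝ, (if x i ≤ q then (1:ℝ) else 0)
      ∂(Measure.pi fun _ : Fin n => volume.restrict (Icc (0:ℝ) 1))) = q := by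
  haveI : IsProbabilityMeasure (volume.restrict (Icc (0:ℝ) 1)) := ⟨by simp⟩
  set S : Set (Fin n → ℝ) := {x | x i ≤ q} with hSdef
  have hS : MeasurableSet S := measurableSet_le (measurable_pi_apply i) measurable_const
  have hfun : (fun x : Fin n → ℝ => if x i ≤ q then (1:ℝ) else 0)
      = S.indicator (fun _ => (1:ℝ)) := by
    ext x
    by_cases h : x i ≤ q <;> simp [S, Set.indicator, h]
  rw [hfun, integral_indicator hS, setIntegral_const]
  have hSpi : S = Set.pi univ (fun j => if j = i then Iic q else univ) := by
    ext x
    simp only [S, mem_setOf_eq, Set.mem_pi, mem_univ, forall_true_left]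
    constructor
    · intro h j
      by_cases hj : j = i
      · subst hj; simpa using h
      · simp [hj]
    · intro h
      have := h i
      simpa using this
  have hmeas : (Measure.pi fun _ : Fin n => volume.restrict (Icc (0:ℝ) 1)) S
      = ENNReal.ofReal q := by
    rw [hSpi, Measure.pi_pi]
    rw [Finset.prod_eq_single i]
    · have hif : (if i = i then Iic q else (univ : Set ℝ)) = Iic q := if_pos rfl
      rw [hif, Measure.restrict_apply measurableSet_Iic]
      have : Iic q ∩ Icc (0:ℝ) 1 = Icc 0 q := by
        ext y
        simp only [mem_inter_iff, mem_Iic, mem_Icc]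
        constructor
        · rintro ⟨h1, h2, _⟩; exact ⟨h2, h1⟩
        · rintro ⟨h1, h2⟩; exact ⟨h2, ⟨h1, le_trans h2 hq.2⟩⟩
      rw [this, Real.volume_Icc]
      norm_num
    · intro j _ hj
      simp only [if_neg hj]
      exact measure_univ
    · intro h
      exact absurd (Finset.mem_univ i) h
  rw [measureReal_def, hmeas, ENNReal.toReal_ofReal hq.1]
  simp

/-- main pointwise (in q) bound for the inner integral -/
lemma aux_inner_bound (n : ℕ) (hn : 0 < n) (d : ℝ) (hd : 1 ≤ d) (w : ℝ) (hw : 0 ≤ w)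
    (q : ℝ) (hq : q ∈ Icc (0:ℝ) 1) :
    (n:ℝ) ^ (1 - 1/d) * w ^ (1/d) * q ≤
    ∫ qq : Fin n → ℝ,
      (∑ i, (w * (if qq i ≤ q then (1:ℝ) else 0)
          / (∑ j, if qq j ≤ q then (1:ℝ) else 0)) ^ (1/d))
      ∂(Measure.pi fun _ : Fin n => volume.restrict (Icc (0:ℝ) 1)) := by
  have hd0 : (0:ℝ) < d := lt_of_lt_of_le one_pos hd
  have hdinv : (0:ℝ) < 1/d := by positivity
  have hn' : (0:ℝ) < n := by exact_mod_cast hn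
  haveI : IsProbabilityMeasure (volume.restrict (Icc (0:ℝ) 1)) := ⟨by simp⟩
  set μ := Measure.pi fun _ : Fin n => volume.restrict (Icc (0:ℝ) 1) with hμ
  set χ : Fin n → (Fin n → ℝ) → ℝ := fun i x => if x i ≤ q then (1:ℝ) else 0 with hχdef
  set Z : (Fin n → ℝ) → ℝ := fun x => ∑ j, χ j x with hZdef
  have hχmeas : ∀ i, Measurable (χ i) := fun i =>
    Measurable.ite (measurableSet_le (measurable_pi_apply i) measurable_const)
      measurable_const measurable_const
  have hχnn : ∀ i x, 0 ≤ χ i x := by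
    intro i x; rw [hχdef]; positivity
  have hχle : ∀ i x, χ i x ≤ 1 := by
    intro i x; rw [hχdef]
    by_cases h : x i ≤ q <;> simp [h]
  have hZnn : ∀ x, 0 ≤ Z x := fun x => Finset.sum_nonneg fun j _ => hχnn j x
  have hZle : ∀ x, Z x ≤ n := by
    intro x
    calc Z x ≤ ∑ _j : Fin n, (1:ℝ) := Finset.sum_le_sum fun j _ => hχle j x
      _ = n := by simp
  set c : ℝ := (w / n) ^ (1/d) with hcdef
  have hc_nn : 0 ≤ c := Real.rpow_nonneg (by positivity) _
  have hptwise : ∀ x, Z x * c ≤ ∑ i, (w * χ i x / Z x) ^ (1/d) := by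
    intro x
    have hsum : Z x * c = ∑ i, χ i x * c := by
      rw [hZdef, Finset.sum_mul]
    rw [hsum]
    refine Finset.sum_le_sum fun i _ => ?_
    by_cases h : x i ≤ q
    · have hχ1 : χ i x = 1 := by simp [hχdef, h]
      have hZ1 : (1:ℝ) ≤ Z x := by
        have h2 := Finset.single_le_sum (f := fun j => χ j x)
          (fun j _ => hχnn j x) (Finset.mem_univ i)
        simp only [hχ1] at h2
        exact h2
      rw [hχ1, one_mul, mul_one, hcdef]
      apply Real.rpow_le_rpow (by positivity) _ hdinv.le
      apply div_le_div_of_nonneg_left hw (lt_of_lt_of_le one_pos hZ1) (hZle x)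
    · have hχ0 : χ i x = 0 := by simp [hχdef, h]
      rw [hχ0, zero_mul, mul_zero, zero_div,
        Real.zero_rpow (ne_of_gt hdinv)]
  -- integrability
  have hZmeas : Measurable Z := Finset.measurable_sum _ fun j _ => hχmeas j
  have hrpow_meas : Measurable fun y : ℝ => y ^ (1/d) :=
    (Real.continuous_rpow_const hdinv.le).measurable
  have hfmeas : Measurable (fun x => ∑ i, (w * χ i x / Z x) ^ (1/d)) :=
    Finset.measurable_sum _ fun i _ =>
      hrpow_meas.comp ((measurable_const.mul (hχmeas i)).div hZmeas)
  have hint_f : Integrable (fun x => ∑ i, (w * χ i x / Z x) ^ (1/d)) μ := by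
    apply Integrable.mono' (integrable_const ((n:ℝ) * max 1 w)) hfmeas.aestronglyMeasurable
    apply Filter.Eventually.of_forall
    intro x
    rw [Real.norm_eq_abs, abs_of_nonneg]
    · exact aux_sum_le n d hd w hw q x
    · exact aux_sum_nonneg n d w hw q x
  have hint_g : Integrable (fun x => Z x * c) μ := by
    apply Integrable.mono' (integrable_const ((n:ℝ) * c)) (hZmeas.mul_const c).aestronglyMeasurable
    apply Filter.Eventually.of_forall
    intro x
    rw [Real.norm_eq_abs, abs_of_nonneg (mul_nonneg (hZnn x) hc_nn)]
    exact mul_le_mul_of_nonneg_right (hZle x) hc_nn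
  have hmono := integral_mono hint_g hint_f hptwise
  have hintχ : ∀ i, Integrable (χ i) μ := by
    intro i
    apply Integrable.mono' (integrable_const (1:ℝ)) (hχmeas i).aestronglyMeasurable
    apply Filter.Eventually.of_forall
    intro x
    rw [Real.norm_eq_abs, abs_of_nonneg (hχnn i x)]
    exact hχle i x
  have hintZ : ∫ x, Z x * c ∂μ = ((n:ℝ) * q) * c := by
    rw [integral_mul_const]
    congr 1
    rw [hZdef]
    have : ∫ x, (∑ j, χ j x) ∂μ = ∑ j, ∫ x, χ j x ∂μ :=
      integral_finset_sum _ fun j _ => hintχ j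
    rw [this]
    have : ∀ j : Fin n, ∫ x, χ j x ∂μ = q := fun j => aux_coord_integral n j q hq
    rw [Finset.sum_congr rfl fun j _ => this j]
    simp [mul_comm]
  rw [hintZ] at hmono
  refine le_trans (le_of_eq ?_) hmono
  rw [hcdef, Real.div_rpow hw hn'.le, Real.rpow_sub hn', Real.rpow_one]
  have hnd : (0:ℝ) < (n:ℝ) ^ (1/d) := Real.rpow_pos_of_pos hn' _
  field_simp

/-- revenue curve bound from concavity -/
lemma aux_rev_bound {v : ℝ → ℝ} (hconc : ConcaveOn ℝ (Icc (0:ℝ) 1) (fun q => v q * q))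
    (hv1 : v 1 = 0) {q : ℝ} (hq : q ∈ Icc (1/2 : ℝ) 1) :
    (1 - q) * v (1/2) ≤ v q * q := by
  have h := hconc.2 (show (1/2:ℝ) ∈ Icc (0:ℝ) 1 by norm_num)
    (show (1:ℝ) ∈ Icc (0:ℝ) 1 by norm_num)
    (show (0:ℝ) ≤ 2 - 2*q by linarith [hq.2])
    (show (0:ℝ) ≤ 2*q - 1 by linarith [hq.1])
    (show (2 - 2*q) + (2*q - 1) = 1 by ring)
  simp only [smul_eq_mul] at h
  have heq : (2 - 2*q) * (1/2) + (2*q - 1) * 1 = q := by ring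
  rw [heq, hv1] at h
  nlinarith [h]

theorem stmt_10 (n : ℕ) (hn : 0 < n) (d : ℝ) (hd : 1 ≤ d)
    (v : ℝ → ℝ)
    (hv_nonneg : ∀ q ∈ Icc (0:ℝ) 1, 0 ≤ v q)
    (hv_anti : AntitoneOn v (Icc (0:ℝ) 1))
    (hconc : ConcaveOn ℝ (Icc (0:ℝ) 1) (fun q => v q * q))
    (hv1 : v 1 = 0)
    (κ : ℝ) (hκ : κ = v (1/2)) :
    (∫ qhat in (0:ℝ)..1,
      ∫ qq : Fin n → ℝ,
        (∑ i, (v qhat * (if qq i ≤ qhat then (1:ℝ) else 0)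
            / (∑ j, if qq j ≤ qhat then (1:ℝ) else 0)) ^ (1/d))
      ∂(Measure.pi fun _ : Fin n => volume.restrict (Icc (0:ℝ) 1)))
    ≥ (1/8) * (n:ℝ) ^ (1 - 1/d) * κ ^ (1/d) := by
  have hd0 : (0:ℝ) < d := lt_of_lt_of_le one_pos hd
  have hdinv : (0:ℝ) < 1/d := by positivity
  have hn' : (0:ℝ) < n := by exact_mod_cast hn
  haveI : IsProbabilityMeasure (volume.restrict (Icc (0:ℝ) 1)) := ⟨by simp⟩
  set μ := Measure.pi fun _ : Fin n => volume.restrict (Icc (0:ℝ) 1) with hμ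
  -- clamped version of v
  set v' : ℝ → ℝ := fun q => v (aux_clamp q) with hv'def
  have hv'eq : ∀ q ∈ Icc (0:ℝ) 1, v' q = v q := by
    intro q hq; rw [hv'def]; simp only []; rw [aux_clamp_eq hq]
  have hv'anti : Antitone v' := by
    intro a b hab
    exact hv_anti (aux_clamp_mem a) (aux_clamp_mem b) (aux_clamp_mono hab)
  have hv'nn : ∀ q, 0 ≤ v' q := fun q => hv_nonneg _ (aux_clamp_mem q)
  have hv'le : ∀ q, v' q ≤ v 0 := by
    intro q
    exact hv_anti (left_mem_Icc.mpr zero_le_one) (aux_clamp_mem q) (aux_clamp_mem q).1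
  haveI : IsProbabilityMeasure μ := by rw [hμ]; infer_instance
  set F : ℝ → ℝ := fun qhat => ∫ qq : Fin n → ℝ,
      (∑ i, (v' qhat * (if qq i ≤ qhat then (1:ℝ) else 0)
          / (∑ j, if qq j ≤ qhat then (1:ℝ) else 0)) ^ (1/d)) ∂μ with hFdef
  have hcongr : (∫ qhat in (0:ℝ)..1,
      ∫ qq : Fin n → ℝ,
        (∑ i, (v qhat * (if qq i ≤ qhat then (1:ℝ) else 0)
            / (∑ j, if qq j ≤ qhat then (1:ℝ) else 0)) ^ (1/d)) ∂μ)
      = ∫ qhat in (0:ℝ)..1, F qhat := by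
    apply intervalIntegral.integral_congr
    intro qh hqh
    rw [Set.uIcc_of_le (by norm_num : (0:ℝ) ≤ 1)] at hqh
    simp only [hFdef]
    rw [hv'eq qh hqh]
  rw [ge_iff_le, hcongr]
  -- measurability of F
  have hf_joint : Measurable (fun p : ℝ × (Fin n → ℝ) =>
      ∑ i, (v' p.1 * (if p.2 i ≤ p.1 then (1:ℝ) else 0)
        / (∑ j, if p.2 j ≤ p.1 then (1:ℝ) else 0)) ^ (1/d)) := by
    have hv'meas : Measurable v' := hv'anti.measurable
    have hχm : ∀ i : Fin n, Measurable (fun p : ℝ × (Fin n → ℝ) =>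
        if p.2 i ≤ p.1 then (1:ℝ) else 0) := by
      intro i
      have hm : Measurable fun a : ℝ × (Fin n → ℝ) => a.2 i :=
        (measurable_pi_apply i).comp measurable_snd
      exact Measurable.ite (measurableSet_le hm measurable_fst)
        measurable_const measurable_const
    have hZm : Measurable (fun p : ℝ × (Fin n → ℝ) =>
        ∑ j, if p.2 j ≤ p.1 then (1:ℝ) else 0) :=
      Finset.measurable_sum _ fun j _ => hχm j
    have hrpow : Measurable fun y : ℝ => y ^ (1/d) :=
      (Real.continuous_rpow_const hdinv.le).measurable
    exact Finset.measurable_sum _ fun i _ =>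
      hrpow.comp (((hv'meas.comp measurable_fst).mul (hχm i)).div hZm)
  have hFmeas : Measurable F := by
    have h := (hf_joint.stronglyMeasurable.integral_prod_right' (ν := μ)).measurable
    exact h
  set B : ℝ := n * max 1 (v 0) with hBdef
  have hFbd : ∀ x, |F x| ≤ B := by
    intro x
    have hb : ∀ qq : Fin n → ℝ, ‖(∑ i, (v' x * (if qq i ≤ x then (1:ℝ) else 0)
        / (∑ j, if qq j ≤ x then (1:ℝ) else 0)) ^ (1/d))‖ ≤ B := by
      intro qq
      rw [Real.norm_eq_abs, abs_of_nonneg (aux_sum_nonneg n d (v' x) (hv'nn x) x qq)]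
      refine le_trans (aux_sum_le n d hd (v' x) (hv'nn x) x qq) ?_
      rw [hBdef]
      exact mul_le_mul_of_nonneg_left (max_le_max le_rfl (hv'le x)) (Nat.cast_nonneg n)
    have h2 := norm_integral_le_of_norm_le_const (μ := μ) (Filter.Eventually.of_forall hb)
    rw [measureReal_def, measure_univ, ENNReal.toReal_one, mul_one] at h2
    simpa [Real.norm_eq_abs, hFdef] using h2
  have hFnn : ∀ x, 0 ≤ F x := by
    intro x
    simp only [hFdef]
    exact integral_nonneg fun qq => aux_sum_nonneg n d (v' x) (hv'nn x) x qq
  have hFint : ∀ a b : ℝ, IntervalIntegrable F volume a b := fun a b =>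
    aux_intervalIntegrable hFmeas B hFbd a b
  have hκnn : 0 ≤ κ := hκ ▸ hv_nonneg _ (by norm_num)
  rcases eq_or_lt_of_le hκnn with hκ0 | hκpos
  · rw [← hκ0, Real.zero_rpow (ne_of_gt hdinv), mul_zero]
    exact intervalIntegral.integral_nonneg (by norm_num) (fun u _ => hFnn u)
  · have hpt : ∀ x ∈ Icc (1/2:ℝ) 1, (n:ℝ)^(1 - 1/d) * κ^(1/d) * (1 - x) ≤ F x := by
      intro x hx
      have hx01 : x ∈ Icc (0:ℝ) 1 := ⟨by linarith [hx.1], hx.2⟩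
      have h1 : (n:ℝ)^(1 - 1/d) * (v' x)^(1/d) * x ≤ F x :=
        aux_inner_bound n hn d hd (v' x) (hv'nn x) x hx01
      refine le_trans ?_ h1
      rw [hv'eq x hx01]
      have key : κ^(1/d) * (1 - x) ≤ (v x)^(1/d) * x := by
        have hvκ : v x ≤ κ := hκ ▸ hv_anti (by norm_num) hx01 hx.1
        have hvnn : 0 ≤ v x := hv_nonneg x hx01
        have hR : (1 - x) * κ ≤ v x * x := hκ ▸ aux_rev_bound hconc hv1 hx
        rcases eq_or_lt_of_le hvnn with hv0 | hvpos
        · have h5 : v x * x = 0 := by rw [← hv0]; ring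
          rw [h5] at hR
          have h6 : 1 - x ≤ 0 := by nlinarith
          have hx1 : x = 1 := le_antisymm hx.2 (by linarith)
          rw [hx1, hv1]
          rw [Real.zero_rpow (ne_of_gt hdinv)]
          norm_num
        · have e1 : (v x)^(1/d) = (v x)^(1/d - 1) * (v x) := by
            have h7 := Real.rpow_add hvpos (1/d - 1) 1
            rw [Real.rpow_one] at h7
            rw [show (1/d - 1) + 1 = 1/d by ring] at h7
            exact h7
          have e2 : κ^(1/d) = κ^(1/d - 1) * κ := by
            have h7 := Real.rpow_add hκpos (1/d - 1) 1
            rw [Real.rpow_one] at h7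
            rw [show (1/d - 1) + 1 = 1/d by ring] at h7
            exact h7
          rw [e1, e2]
          have h3 : κ^(1/d - 1) ≤ (v x)^(1/d - 1) := by
            apply Real.rpow_le_rpow_of_nonpos hvpos hvκ
            have : 1/d ≤ 1 := by rw [div_le_one hd0]; exact hd
            linarith
          have h4 : 0 ≤ (1 - x) * κ := mul_nonneg (by linarith [hx.2]) hκnn
          calc κ^(1/d - 1) * κ * (1 - x) = κ^(1/d - 1) * ((1 - x) * κ) := by ring
            _ ≤ (v x)^(1/d - 1) * (v x * x) :=
                mul_le_mul h3 hR h4 (Real.rpow_nonneg hvnn _)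
            _ = (v x)^(1/d - 1) * (v x) * x := by ring
      have hne : 0 ≤ (n:ℝ)^(1 - 1/d) := Real.rpow_nonneg hn'.le _
      calc (n:ℝ)^(1 - 1/d) * κ^(1/d) * (1 - x)
          = (n:ℝ)^(1 - 1/d) * (κ^(1/d) * (1 - x)) := by ring
        _ ≤ (n:ℝ)^(1 - 1/d) * ((v x)^(1/d) * x) := mul_le_mul_of_nonneg_left key hne
        _ = (n:ℝ)^(1 - 1/d) * (v x)^(1/d) * x := by ring
    have hsplit : ∫ q in (0:ℝ)..1, F q
        = (∫ q in (0:ℝ)..(1/2), F q) + ∫ q in (1/2:ℝ)..1, F q :=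
      (intervalIntegral.integral_add_adjacent_intervals (hFint 0 (1/2)) (hFint (1/2) 1)).symm
    have h1 : 0 ≤ ∫ q in (0:ℝ)..(1/2), F q :=
      intervalIntegral.integral_nonneg (by norm_num) (fun u _ => hFnn u)
    have h2 : (∫ q in (1/2:ℝ)..1, (n:ℝ)^(1 - 1/d) * κ^(1/d) * (1 - q))
        ≤ ∫ q in (1/2:ℝ)..1, F q := by
      exact intervalIntegral.integral_mono_on (by norm_num)
        (Continuous.intervalIntegrable
          (continuous_const.mul (continuous_const.sub continuous_id)) _ _)
        (hFint (1/2) 1) hpt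
    have h3 : (∫ q in (1/2:ℝ)..1, (n:ℝ)^(1 - 1/d) * κ^(1/d) * (1 - q))
        = (n:ℝ)^(1 - 1/d) * κ^(1/d) * (1/8) := by
      rw [intervalIntegral.integral_const_mul]
      have h8 : (∫ q in (1/2:ℝ)..1, (1 - q)) = 1/8 := by
        rw [intervalIntegral.integral_sub intervalIntegrable_const
          (Continuous.intervalIntegrable continuous_id' _ _)]
        rw [intervalIntegral.integral_const, integral_id]
        norm_num
      rw [h8]
    calc (1/8) * (n:ℝ)^(1 - 1/d) * κ^(1/d)
        = (n:ℝ)^(1 - 1/d) * κ^(1/d) * (1/8) := by ring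
      _ = ∫ q in (1/2:ℝ)..1, ((n:ℝ)^(1 - 1/d) * κ^(1/d) * (1 - q)) := h3.symm
      _ ≤ ∫ q in (1/2:ℝ)..1, F q := h2
      _ ≤ ∫ q in (0:ℝ)..1, F q := by rw [hsplit]; linarith
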